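/- Let n ≥ 2 and let w₀, …, wₙ ∈ ℝⁿ satisfy w₀ + ⋯ + wₙ = 0. Define the facet normals z₀, …, zₙ by z_p := −[w₀, w₁, …, wₙ with w_p and w_{p+1} omitted] for 0 ≤ p ≤ n−1, and zₙ := (−1)^(n+1)·[w₁, …, w_{n−1}]. Then the n × n matrix whose p-th column is z_p (1 ≤ p ≤ n) equals the cofactor matrix of the n × n matrix whose k-th column is the partial sum w₁ + w₂ + ⋯ + w_k (1 ≤ k ≤ n). -/

import Mathlib

open scoped RealInnerProductSpace BigOperators

/-- The `n × n` matrix whose first column is `w₀` and whose remaining columns are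
`w 0, …, w (n - 2)`. -/
noncomputable def colMat {n : ℕ} (w₀ : EuclideanSpace ℝ (Fin n))
    (w : Fin (n - 1) → EuclideanSpace ℝ (Fin n)) : Matrix (Fin n) (Fin n) ℝ :=
  Matrix.of fun r c =>
    if _h : (c : ℕ) = 0 then w₀ r
    else w ⟨(c : ℕ) - 1, by have := c.isLt; omega⟩ r

/-- The vector product `[w 0, …, w (n-2)]` of `n - 1` vectors in `ℝⁿ`: the unique vector `v`
with `⟪w₀, v⟫ = det (w₀, w 0, …, w (n-2))` for all `w₀`. -/
noncomputable def vprod {n : ℕ} (w : Fin (n - 1) → EuclideanSpace ℝ (Fin n)) :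
    EuclideanSpace ℝ (Fin n) :=
  (WithLp.equiv 2 (Fin n → ℝ)).symm fun i => (colMat (EuclideanSpace.single i 1) w).det

/-- The facet normal `z p` of a loop `w 0, …, w n` of `n + 1` vectors in `ℝⁿ`:
`z p = -[w 0, …, w n  with  w p, w (p+1)  omitted]` for `0 ≤ p ≤ n - 1`, and
`z n = (-1)^(n+1) • [w 1, …, w (n-1)]`. -/
noncomputable def facet {n : ℕ} (w : Fin (n + 1) → EuclideanSpace ℝ (Fin n))
    (p : Fin (n + 1)) : EuclideanSpace ℝ (Fin n) :=
  if _h : (p : ℕ) < n then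
    - vprod (fun j : Fin (n - 1) =>
        if (j : ℕ) < (p : ℕ) then w ⟨(j : ℕ), by have := j.isLt; omega⟩
        else w ⟨(j : ℕ) + 2, by have := j.isLt; omega⟩)
  else
    ((-1 : ℝ) ^ (n + 1)) • vprod (fun j : Fin (n - 1) => w ⟨(j : ℕ) + 1, by have := j.isLt; omega⟩)

/-- The cofactor matrix of a square matrix: the transpose of the adjugate,
so that `cof X * Xᵀ = (det X) • 1`. -/
noncomputable def cof {n : ℕ} (X : Matrix (Fin n) (Fin n) ℝ) : Matrix (Fin n) (Fin n) ℝ :=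
  (Matrix.adjugate X).transpose

section FacetCofAux

noncomputable def liftB {m : ℕ} (C : Matrix (Fin (m+1)) (Fin (m+1)) ℝ) :
    Matrix (Fin (m+2)) (Fin (m+2)) ℝ :=
  Matrix.of fun p q =>
    if (p : ℕ) = 0 then (if (q : ℕ) = 0 then 1 else 0)
    else if hq : (q : ℕ) = 0 then 0
    else C ⟨(p:ℕ)-1, by have := p.isLt; omega⟩ ⟨(q:ℕ)-1, by have := q.isLt; omega⟩

lemma det_liftB {m : ℕ} (C : Matrix (Fin (m+1)) (Fin (m+1)) ℝ) : (liftB C).det = C.det := by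
  rw [Matrix.det_succ_column_zero]
  rw [Finset.sum_eq_single 0]
  · have h0 : (liftB C) 0 0 = 1 := by simp [liftB]
    rw [h0]
    have : (liftB C).submatrix (Fin.succAbove 0) Fin.succ = C := by
      ext a b
      simp only [Matrix.submatrix_apply, Fin.succAbove_zero, liftB, Matrix.of_apply,
        Fin.val_succ]
      rw [if_neg (by omega), dif_neg (by omega)]
      congr 1
    rw [this]
    simp
  · intro p _ hp
    have : (liftB C) p 0 = 0 := by
      simp only [liftB, Matrix.of_apply]
      rw [if_neg (show ¬ (p:ℕ) = 0 from fun h => hp (Fin.ext h))]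
      simp
    simp [this]
  · simp

lemma colMat_mul {m : ℕ} (u : EuclideanSpace ℝ (Fin (m+2)))
    (v T : Fin (m+1) → EuclideanSpace ℝ (Fin (m+2)))
    (C : Matrix (Fin (m+1)) (Fin (m+1)) ℝ)
    (hT : ∀ b r, T b r = ∑ a, C a b * v a r) :
    colMat u T = colMat u v * liftB C := by
  ext r q
  rw [Matrix.mul_apply]
  by_cases hq : (q : ℕ) = 0
  · rw [Finset.sum_eq_single (0 : Fin (m+2))]
    · simp [colMat, liftB, hq, (Fin.ext hq : q = 0)]
    · intro p _ hp
      have hp' : ¬ (p : ℕ) = 0 := fun h => hp (Fin.ext h)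
      simp [liftB, hp', hq, hp, (Fin.ext hq : q = 0)]
    · simp
  · rw [Fin.sum_univ_succ]
    have hq' : q ≠ 0 := fun h => hq (congrArg Fin.val h)
    have h0 : colMat u v r 0 * liftB C 0 q = 0 := by simp [liftB, hq, hq']
    rw [h0, zero_add]
    have hC : colMat u T r q = T ⟨(q:ℕ)-1, by have := q.isLt; omega⟩ r := by
      simp [colMat, hq, hq']
    rw [hC, hT]
    apply Finset.sum_congr rfl
    intro a _
    have h1 : colMat u v r a.succ = v a r := by
      simp only [colMat, Matrix.of_apply, Fin.val_succ]
      rw [dif_neg (by omega)]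
      exact congrArg (fun i => v i r) (Fin.ext (by simp))
    have h2 : liftB C a.succ q = C a ⟨(q:ℕ)-1, by have := q.isLt; omega⟩ := by
      simp only [liftB, Matrix.of_apply, Fin.val_succ]
      rw [if_neg (by omega), dif_neg hq]
      congr 1
    rw [h1, h2, mul_comm]

lemma vprod_comb {m : ℕ} (v T : Fin (m+1) → EuclideanSpace ℝ (Fin (m+2)))
    (C : Matrix (Fin (m+1)) (Fin (m+1)) ℝ)
    (hT : ∀ b r, T b r = ∑ a, C a b * v a r) :
    vprod (n := m+2) T = C.det • vprod (n := m+2) v := by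
  ext r
  show (colMat (EuclideanSpace.single r 1) T).det
      = C.det * (colMat (EuclideanSpace.single r 1) v).det
  rw [colMat_mul _ v T C hT, Matrix.det_mul, det_liftB, mul_comm]


lemma val_succAbove {N : ℕ} (p : Fin (N+1)) (i : Fin N) :
    ((p.succAbove i) : ℕ) = if (i:ℕ) < (p:ℕ) then (i:ℕ) else (i:ℕ)+1 := by
  rw [Fin.succAbove]
  split_ifs with h1 h2 h2 <;> simp_all [Fin.lt_def, Fin.le_def]

lemma sum_ite_eq_val {N : ℕ} (f : Fin N → ℝ) (t : ℕ) (ht : t < N) :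
    (∑ j : Fin N, if (j:ℕ) = t then f j else 0) = f ⟨t, ht⟩ := by
  rw [Finset.sum_eq_single (⟨t, ht⟩ : Fin N)]
  · simp
  · intro j _ hj
    rw [if_neg (by simpa [Fin.ext_iff] using hj)]
  · simp

noncomputable def matU (m : ℕ) : Matrix (Fin (m+1)) (Fin (m+1)) ℝ :=
  Matrix.of fun a b => if (a:ℕ) = (b:ℕ) then 1 else if (a:ℕ)+1 = (b:ℕ) then -1 else 0

lemma det_matU (m : ℕ) : (matU m).det = 1 := by
  have h : (matU m).BlockTriangular id := by
    intro i j hij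
    simp only [id_eq] at hij
    have := Fin.lt_def.mp hij
    simp only [matU, Matrix.of_apply]
    rw [if_neg (by omega), if_neg (by omega)]
  rw [Matrix.det_of_upperTriangular h]
  apply Finset.prod_eq_one
  intro i _
  simp [matU]

noncomputable def matK (m t : ℕ) : Matrix (Fin (m+1)) (Fin (m+1)) ℝ :=
  Matrix.of fun a b =>
    if (b:ℕ) = t then -1
    else if (b:ℕ) < t then (if (a:ℕ) = (b:ℕ)+1 then 1 else 0)
    else (if (a:ℕ) = (b:ℕ) then 1 else 0)

lemma det_matK (m t : ℕ) (ht : t < m + 1) : (matK m t).det = (-1)^(t+1) := by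
  rw [Matrix.det_succ_row_zero]
  rw [Finset.sum_eq_single (⟨t, ht⟩ : Fin (m+1))]
  · have h0 : matK m t 0 ⟨t, ht⟩ = -1 := by simp [matK]
    have hsub : (matK m t).submatrix Fin.succ (⟨t, ht⟩ : Fin (m+1)).succAbove = 1 := by
      ext i j
      have hv := val_succAbove (⟨t, ht⟩ : Fin (m+1)) j
      simp only [Matrix.submatrix_apply, matK, Matrix.of_apply, Fin.val_succ, hv]
      by_cases hij : (i:ℕ) = (j:ℕ)
      · have hIJ : i = j := Fin.ext hij
        subst hIJ
        rw [Matrix.one_apply_eq]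
        split_ifs <;> first | rfl | exact (‹False›).elim | omega
      · rw [Matrix.one_apply_ne (fun h => hij (congrArg Fin.val h))]
        split_ifs <;> first | rfl | exact (‹False›).elim | omega
    rw [h0, hsub, Matrix.det_one]
    simp [pow_succ]
  · intro j _ hj
    have hj' : (j:ℕ) ≠ t := by simpa [Fin.ext_iff] using hj
    have : matK m t 0 j = 0 := by
      simp only [matK, Matrix.of_apply, Fin.val_zero]
      rw [if_neg hj']
      split_ifs <;> first | rfl | exact (‹False›).elim | omega | exact if_neg (by omega)
    simp [this]
  · simp


noncomputable def sumG {m : ℕ} (w : Fin (m+3) → EuclideanSpace ℝ (Fin (m+2)))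
    (r : Fin (m+2)) (s : ℕ) : ℝ :=
  ∑ j : Fin (m+3), if 1 ≤ (j:ℕ) ∧ (j:ℕ) ≤ s then w j r else 0

lemma sumG_zero {m : ℕ} (w : Fin (m+3) → EuclideanSpace ℝ (Fin (m+2))) (r : Fin (m+2)) :
    sumG w r 0 = 0 := by
  unfold sumG
  apply Finset.sum_eq_zero
  intro j _
  rw [if_neg (by omega)]

lemma sumG_sub_succ {m : ℕ} (w : Fin (m+3) → EuclideanSpace ℝ (Fin (m+2))) (r : Fin (m+2))
    (s : ℕ) (hs : s + 1 < m+3) :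
    sumG w r (s+1) - sumG w r s = w ⟨s+1, hs⟩ r := by
  unfold sumG
  rw [← Finset.sum_sub_distrib, ← sum_ite_eq_val (fun j => w j r) (s+1) hs]
  apply Finset.sum_congr rfl
  intro j _
  split_ifs <;> first | ring1 | omega

lemma sumG_sub_two {m : ℕ} (w : Fin (m+3) → EuclideanSpace ℝ (Fin (m+2))) (r : Fin (m+2))
    (s : ℕ) (hs : s + 2 < m+3) :
    sumG w r (s+2) - sumG w r s = w ⟨s+1, by omega⟩ r + w ⟨s+2, hs⟩ r := by
  unfold sumG
  rw [← Finset.sum_sub_distrib, ← sum_ite_eq_val (fun j => w j r) (s+1) (by omega),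
    ← sum_ite_eq_val (fun j => w j r) (s+2) hs, ← Finset.sum_add_distrib]
  apply Finset.sum_congr rfl
  intro j _
  split_ifs <;> first | ring1 | omega

lemma matU_sum {m : ℕ} (F : Fin (m+1) → ℝ) (b : Fin (m+1)) :
    ∑ a, matU m a b * F a
      = F b - (if (b:ℕ) = 0 then 0 else F ⟨(b:ℕ)-1, by have := b.isLt; omega⟩) := by
  have step : ∀ a : Fin (m+1), matU m a b * F a
      = (if (a:ℕ) = (b:ℕ) then F a else 0) + (if (a:ℕ)+1 = (b:ℕ) then -(F a) else 0) := by
    intro a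
    simp only [matU, Matrix.of_apply]
    split_ifs <;> first | ring1 | omega
  rw [Finset.sum_congr rfl (fun a _ => step a), Finset.sum_add_distrib]
  have h1 : (∑ a : Fin (m+1), if (a:ℕ) = (b:ℕ) then F a else 0) = F b := by
    rw [sum_ite_eq_val F (b:ℕ) b.isLt]
  rw [h1]
  by_cases hb : (b:ℕ) = 0
  · rw [if_pos hb]
    rw [Finset.sum_eq_zero (fun a _ => by rw [if_neg (by omega)])]
    ring
  · rw [if_neg hb]
    have h2 : (∑ a : Fin (m+1), if (a:ℕ)+1 = (b:ℕ) then -(F a) else 0)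
        = -(F ⟨(b:ℕ)-1, by have := b.isLt; omega⟩) := by
      rw [← sum_ite_eq_val (fun a => -(F a)) ((b:ℕ)-1) (by have := b.isLt; omega)]
      apply Finset.sum_congr rfl
      intro a _
      split_ifs <;> first | rfl | omega
    rw [h2]
    ring

lemma sum_tuple_reindex {m t : ℕ} (ht : t < m+1) (f : Fin (m+3) → ℝ) :
    (∑ a : Fin (m+1), if h : (a:ℕ) < t+1 then f ⟨(a:ℕ), by have := a.isLt; omega⟩
        else f ⟨(a:ℕ)+2, by have := a.isLt; omega⟩)
    = ∑ j : Fin (m+3), if (j:ℕ) ≠ t+1 ∧ (j:ℕ) ≠ t+2 then f j else 0 := by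
  rw [← Finset.sum_filter]
  refine Finset.sum_nbij'
    (i := fun a => if h : (a:ℕ) < t+1 then (⟨(a:ℕ), by have := a.isLt; omega⟩ : Fin (m+3))
      else ⟨(a:ℕ)+2, by have := a.isLt; omega⟩)
    (j := fun j => if h : (j:ℕ) < t+1 then (⟨(j:ℕ), by omega⟩ : Fin (m+1))
      else ⟨(j:ℕ)-2, by have := j.isLt; omega⟩)
    ?_ ?_ ?_ ?_ ?_
  · intro a _
    simp only [Finset.mem_filter, Finset.mem_univ, true_and, ne_eq, apply_dite (Fin.val)]
    split_ifs <;> omega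
  · intro j _
    exact Finset.mem_univ _
  · intro a _
    apply Fin.ext
    simp only [apply_dite (Fin.val)]
    split_ifs <;> omega
  · intro j hj
    simp only [Finset.mem_filter, Finset.mem_univ, true_and, ne_eq] at hj
    apply Fin.ext
    simp only [apply_dite (Fin.val)]
    split_ifs <;> omega
  · intro a _
    split_ifs <;> rfl

lemma big_main {m t : ℕ} (ht : t < m+1) (w : Fin (m+3) → EuclideanSpace ℝ (Fin (m+2)))
    (hwr : ∀ r, (∑ j : Fin (m+3), w j r) = 0) (b : Fin (m+1)) (r : Fin (m+2)) :
    ∑ a, matU m a b * sumG w r ((if (a:ℕ) < t then (a:ℕ) else (a:ℕ)+1)+1)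
    = ∑ a, matK m t a b *
        (if h : (a:ℕ) < t+1 then w ⟨(a:ℕ), by have := a.isLt; omega⟩ r
          else w ⟨(a:ℕ)+2, by have := a.isLt; omega⟩ r) := by
  set F : Fin (m+1) → ℝ := fun a => sumG w r ((if (a:ℕ) < t then (a:ℕ) else (a:ℕ)+1)+1) with hF
  set G : Fin (m+1) → ℝ := fun a =>
    (if h : (a:ℕ) < t+1 then w ⟨(a:ℕ), by have := a.isLt; omega⟩ r
      else w ⟨(a:ℕ)+2, by have := a.isLt; omega⟩ r) with hG
  rw [matU_sum F b]
  rcases lt_trichotomy (b:ℕ) t with hbt | hbt | hbt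
  · -- b < t
    have h1 : F b = sumG w r ((b:ℕ)+1) := by
      simp only [hF]; rw [if_pos hbt]
    have h2 : (if (b:ℕ) = 0 then 0 else F ⟨(b:ℕ)-1, by have := b.isLt; omega⟩)
        = sumG w r (b:ℕ) := by
      split_ifs with h0
      · rw [h0, sumG_zero]
      · simp only [hF]
        rw [if_pos (by omega)]
        congr 1
        omega
    rw [h1, h2, sumG_sub_succ w r (b:ℕ) (by have := b.isLt; omega)]
    have step : ∀ a : Fin (m+1), matK m t a b * G a
        = if (a:ℕ) = (b:ℕ)+1 then G a else 0 := by
      intro a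
      simp only [matK, Matrix.of_apply]
      rw [if_neg (by omega), if_pos hbt]
      split_ifs <;> first | ring1 | omega
    rw [Finset.sum_congr rfl (fun a _ => step a),
      sum_ite_eq_val G ((b:ℕ)+1) (by omega)]
    simp only [hG]
    rw [dif_pos (by simp; omega)]
  · -- b = t
    have h1 : F b = sumG w r (t+2) := by
      simp only [hF]; rw [if_neg (by omega)]; congr 1; omega
    have h2 : (if (b:ℕ) = 0 then 0 else F ⟨(b:ℕ)-1, by have := b.isLt; omega⟩)
        = sumG w r t := by
      split_ifs with h0
      · rw [(by omega : t = 0), sumG_zero]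
      · simp only [hF]
        rw [if_pos (by omega)]
        congr 1
        omega
    rw [h1, h2, sumG_sub_two w r t (by omega)]
    have step : ∀ a : Fin (m+1), matK m t a b * G a = -(G a) := by
      intro a
      simp only [matK, Matrix.of_apply]
      rw [if_pos (by omega)]
      ring
    rw [Finset.sum_congr rfl (fun a _ => step a), Finset.sum_neg_distrib]
    rw [show (∑ a, G a) = ∑ j : Fin (m+3), if (j:ℕ) ≠ t+1 ∧ (j:ℕ) ≠ t+2 then w j r else 0
      from sum_tuple_reindex ht (fun j => w j r)]
    have expand : (∑ j : Fin (m+3), if (j:ℕ) ≠ t+1 ∧ (j:ℕ) ≠ t+2 then w j r else 0)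
        = (∑ j : Fin (m+3), w j r)
          - (∑ j : Fin (m+3), if (j:ℕ) = t+1 then w j r else 0)
          - (∑ j : Fin (m+3), if (j:ℕ) = t+2 then w j r else 0) := by
      rw [← Finset.sum_sub_distrib, ← Finset.sum_sub_distrib]
      apply Finset.sum_congr rfl
      intro j _
      split_ifs <;> first | ring1 | omega
    rw [expand, hwr r, sum_ite_eq_val (fun j => w j r) (t+1) (by omega),
      sum_ite_eq_val (fun j => w j r) (t+2) (by omega)]
    ring
  · -- b > t
    have h1 : F b = sumG w r ((b:ℕ)+2) := by
      simp only [hF]; rw [if_neg (by omega)]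
    have h2 : (if (b:ℕ) = 0 then 0 else F ⟨(b:ℕ)-1, by have := b.isLt; omega⟩)
        = sumG w r ((b:ℕ)+1) := by
      rw [if_neg (by omega)]
      simp only [hF]
      rw [if_neg (by simp; omega)]
      congr 1
      simp
      omega
    rw [h1, h2, show (b:ℕ)+2 = ((b:ℕ)+1)+1 from rfl,
      sumG_sub_succ w r ((b:ℕ)+1) (by have := b.isLt; omega)]
    have step : ∀ a : Fin (m+1), matK m t a b * G a
        = if (a:ℕ) = (b:ℕ) then G a else 0 := by
      intro a
      simp only [matK, Matrix.of_apply]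
      rw [if_neg (by omega), if_neg (by omega)]
      split_ifs <;> first | ring1 | omega
    rw [Finset.sum_congr rfl (fun a _ => step a),
      sum_ite_eq_val G (b:ℕ) b.isLt]
    simp only [hG]
    rw [dif_neg (by simp; omega)]

lemma big_last {m : ℕ} (w : Fin (m+3) → EuclideanSpace ℝ (Fin (m+2)))
    (b : Fin (m+1)) (r : Fin (m+2)) :
    ∑ a, matU m a b * sumG w r ((a:ℕ)+1) = w ⟨(b:ℕ)+1, by have := b.isLt; omega⟩ r := by
  rw [matU_sum (fun a => sumG w r ((a:ℕ)+1)) b]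
  have h2 : (if (b:ℕ) = 0 then 0 else sumG w r (((b:ℕ)-1)+1)) = sumG w r (b:ℕ) := by
    split_ifs with h0
    · rw [h0, sumG_zero]
    · congr 1
      omega
  rw [h2, sumG_sub_succ w r (b:ℕ) (by have := b.isLt; omega)]

end FacetCofAux

theorem facet_matrix_eq_cof_of_partial_sums (n : ℕ) (hn : 2 ≤ n)
    (w : Fin (n + 1) → EuclideanSpace ℝ (Fin n)) (hw : (∑ i, w i) = 0) :
    (Matrix.of fun r (c : Fin n) => facet w c.succ r) =
      cof (Matrix.of fun r (c : Fin n) => ∑ j ∈ Finset.Icc (1 : Fin (n + 1)) c.succ, w j r) := by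
  obtain ⟨m, rfl⟩ : ∃ m, n = m + 2 := ⟨n - 2, by omega⟩
  have hwr : ∀ r, (∑ j : Fin (m+3), w j r) = 0 := by
    intro r
    have h := congrArg (EuclideanSpace.proj r) hw
    simpa [map_sum] using h
  set S : Matrix (Fin (m+2)) (Fin (m+2)) ℝ :=
    Matrix.of (fun r (c : Fin (m+2)) => ∑ j ∈ Finset.Icc (1 : Fin (m+2+1)) c.succ, w j r)
    with hSdef
  have hSsum : ∀ (r' : Fin (m+2)) (k : Fin (m+2)), S r' k = sumG w r' ((k:ℕ)+1) := by
    intro r' k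
    show ∑ j ∈ Finset.Icc (1 : Fin (m+3)) k.succ, w j r' = _
    unfold sumG
    rw [← Finset.sum_filter]
    congr 1
    ext j
    simp only [Finset.mem_Icc, Finset.mem_filter, Finset.mem_univ, true_and, Fin.le_def,
      Fin.val_one, Fin.val_succ]
  ext r c
  simp only [Matrix.of_apply]
  -- cofactor entry as determinant of a column update
  have hcof : cof S r c = (S.updateCol c (Pi.single r 1)).det := by
    have h1 : cof S r c = Matrix.adjugate S.transpose r c := by
      rw [cof, Matrix.adjugate_transpose]
    rw [h1, Matrix.adjugate_apply, Matrix.updateRow_transpose, Matrix.det_transpose]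
  -- the tuple of columns of S omitting column c
  set Stup : Fin (m+1) → EuclideanSpace ℝ (Fin (m+2)) := fun b =>
    (WithLp.toLp 2 (fun r' => S r' ⟨if (b:ℕ) < (c:ℕ) then (b:ℕ) else (b:ℕ)+1,
        by have := b.isLt; split <;> omega⟩) : EuclideanSpace ℝ (Fin (m+2)))
    with hStup
  have hperm : (colMat (EuclideanSpace.single r 1) Stup).submatrix id c.cycleRange
      = S.updateCol c (Pi.single r 1) := by
    ext r' q
    simp only [Matrix.submatrix_apply, id_eq, Matrix.updateCol_apply]
    rcases lt_trichotomy q c with h | h | h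
    · rw [Fin.cycleRange_of_lt h, if_neg (Fin.ne_of_lt h)]
      have hv : ((q + 1 : Fin (m+2)) : ℕ) = (q:ℕ) + 1 :=
        Fin.val_add_one_of_lt (lt_of_lt_of_le h (Fin.le_last c))
      simp only [colMat, Matrix.of_apply]
      rw [dif_neg (by omega)]
      show S r' _ = S r' q
      congr 1
      apply Fin.ext
      simp only [hv]
      have hqc : (q:ℕ) < (c:ℕ) := h
      rw [if_pos (by omega)]
      omega
    · rw [Fin.cycleRange_of_eq h, if_pos h]
      simp only [colMat, Matrix.of_apply]
      rw [dif_pos (show ((0 : Fin (m+2)):ℕ) = 0 by simp)]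
      rw [EuclideanSpace.single_apply, Pi.single_apply]
    · rw [Fin.cycleRange_of_gt h, if_neg (Fin.ne_of_gt h)]
      have hq0 : (q:ℕ) ≠ 0 := by
        have := Fin.lt_def.mp h
        omega
      simp only [colMat, Matrix.of_apply]
      rw [dif_neg hq0]
      show S r' _ = S r' q
      congr 1
      apply Fin.ext
      have hqc : (c:ℕ) < (q:ℕ) := h
      simp only []
      rw [if_neg (by omega)]
      omega
  have hdet : (S.updateCol c (Pi.single r 1)).det
      = (-1:ℝ)^(c:ℕ) * (vprod (n := m+2) Stup r) := by
    rw [← hperm, Matrix.det_permute', Fin.sign_cycleRange]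
    norm_num
    rfl
  -- column values of S as partial sums
  have hStupval : ∀ (a : Fin (m+1)) (r' : Fin (m+2)),
      Stup a r' = sumG w r' ((if (a:ℕ) < (c:ℕ) then (a:ℕ) else (a:ℕ)+1)+1) := by
    intro a r'
    rw [hStup]
    show S r' _ = _
    rw [hSsum]
  by_cases hc : (c:ℕ) < m+1
  · -- main case : c.succ < n
    have hcs : ((c.succ : Fin (m+3)) : ℕ) < m+2 := by
      rw [Fin.val_succ]; omega
    set ftup : Fin (m+1) → EuclideanSpace ℝ (Fin (m+2)) := fun j =>
      if (j : ℕ) < ((c.succ : Fin (m+3)) : ℕ) then w ⟨(j : ℕ), by have := j.isLt; omega⟩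
      else w ⟨(j : ℕ) + 2, by have := j.isLt; omega⟩ with hftup
    have hfacet : facet w c.succ = - vprod (n := m+2) ftup := by
      rw [facet, dif_pos hcs]
      rfl
    set T : Fin (m+1) → EuclideanSpace ℝ (Fin (m+2)) := fun b =>
      (WithLp.toLp 2 (fun r' => ∑ a, matU m a b * Stup a r') : EuclideanSpace ℝ (Fin (m+2))) with hT
    have h1 : vprod (n := m+2) T = (matU m).det • vprod (n := m+2) Stup :=
      vprod_comb Stup T (matU m) (fun b r' => rfl)
    have h2 : vprod (n := m+2) T = (matK m (c:ℕ)).det • vprod (n := m+2) ftup := by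
      apply vprod_comb
      intro b r'
      show (∑ a, matU m a b * Stup a r') = _
      rw [Finset.sum_congr rfl (fun a _ => by rw [hStupval a r'])]
      rw [big_main hc w hwr b r']
      apply Finset.sum_congr rfl
      intro a _
      congr 1
      rw [hftup]
      show _ = (if (a : ℕ) < ((c.succ : Fin (m+3)) : ℕ) then w ⟨(a : ℕ), _⟩
        else w ⟨(a : ℕ) + 2, _⟩) r'
      rw [Fin.val_succ]
      split_ifs with hsplit
      · rfl
      · rfl
    rw [det_matU, one_smul] at h1
    rw [det_matK m (c:ℕ) hc] at h2
    rw [h1] at h2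
    -- conclude
    rw [hfacet, hcof, hdet, h2]
    show -(vprod (n := m+2) ftup r)
      = (-1:ℝ)^(c:ℕ) * (((-1:ℝ)^((c:ℕ)+1)) • vprod (n := m+2) ftup) r
    have : (((-1:ℝ)^((c:ℕ)+1)) • vprod (n := m+2) ftup) r
        = ((-1:ℝ)^((c:ℕ)+1)) * (vprod (n := m+2) ftup r) := rfl
    rw [this, ← mul_assoc, ← pow_add]
    have hodd : (-1:ℝ) ^ ((c:ℕ) + ((c:ℕ)+1)) = -1 := Odd.neg_one_pow ⟨(c:ℕ), by ring⟩
    rw [hodd]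
    ring
  · -- last column : c = m+1
    have hcs : ¬ ((c.succ : Fin (m+3)) : ℕ) < m+2 := by
      rw [Fin.val_succ]; omega
    have hcv : (c:ℕ) = m+1 := by have := c.isLt; omega
    set ftup : Fin (m+1) → EuclideanSpace ℝ (Fin (m+2)) := fun j =>
      w ⟨(j : ℕ) + 1, by have := j.isLt; omega⟩ with hftup
    have hfacet : facet w c.succ = ((-1 : ℝ) ^ (m+2+1)) • vprod (n := m+2) ftup := by
      rw [facet, dif_neg hcs]
      rfl
    have h1 : vprod (n := m+2) ftup = (matU m).det • vprod (n := m+2) Stup := by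
      apply vprod_comb
      intro b r'
      rw [hftup]
      show w ⟨(b:ℕ)+1, _⟩ r' = _
      rw [← big_last w b r']
      apply Finset.sum_congr rfl
      intro a _
      rw [hStupval a r', if_pos (by have := a.isLt; omega)]
    rw [det_matU, one_smul] at h1
    rw [hfacet, hcof, hdet, ← h1]
    show ((-1:ℝ)^(m+2+1)) * (vprod (n := m+2) ftup r)
      = (-1:ℝ)^(c:ℕ) * (vprod (n := m+2) ftup r)
    rw [hcv]
    have : (-1:ℝ)^(m+2+1) = (-1:ℝ)^(m+1) := by
      rw [show m+2+1 = (m+1)+2 from rfl, pow_succ, pow_succ]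
      ring
    rw [this]
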